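/- Let A : X → Y and B, C : Y → X be bounded linear operators between Banach spaces satisfying A(BA)² = ABACA = ACABA = (AC)²A. Then for every n ≥ 1, the range of (AC − I)^n is closed if and only if the range of (BA − I)^n is closed. -/

import Mathlib

open Polynomial ContinuousLinearMap


private def mseq : ℕ → ℕ
  | 0 => 0
  | n + 1 => mseq n + n

private lemma mseq_le (n : ℕ) : mseq n ≤ n * n := by
  induction n with
  | zero => simp [mseq]
  | succ k ih =>
      have h : (k+1)*(k+1) = k*k + 2*k + 1 := by ring
      simp only [mseq]
      omega

private def hseq {R : Type*} [Ring R] (s : R) : ℕ → R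
  | 0 => 0
  | n + 1 => hseq s n - hseq s n * s + (mseq n) • (s * s)

private theorem ring_key {R : Type*} [Ring R] (s t d : R) (hd : d = s - t)
    (h1 : s*(s*d) = 0) (h2 : s*(t*d) = 0) (h3 : t*(s*d) = 0) (h4 : t*(t*d) = 0)
    (h5 : s*(d*s) = 0) (h6 : s*(d*t) = 0) (h7 : t*(d*s) = 0) (h8 : t*(d*t) = 0)
    (h9 : s*(s*t) = s*(t*s)) (h10 : t*(s*t) = t*(t*s)) (n : ℕ) :
    ∃ a a' b b' : R, a * a' = 1 ∧ a' * a = 1 ∧ b * b' = 1 ∧ b' * b = 1 ∧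
      (1 - t)^n = a * ((1 - s)^n * b) := by
  -- basic derived facts
  have hdd : d * d = s * d - t * d := by nth_rewrite 1 [hd]; rw [sub_mul]
  have hsdd : s * (d * d) = 0 := by rw [hdd, mul_sub, h1, h2, sub_zero]
  have htdd : t * (d * d) = 0 := by rw [hdd, mul_sub, h3, h4, sub_zero]
  have hsd_s : (s*d)*s = 0 := by rw [mul_assoc, h5]
  have hsd_t : (s*d)*t = 0 := by rw [mul_assoc, h6]
  have hsd_d : (s*d)*d = 0 := by rw [mul_assoc, hsdd]
  have htd_d : (t*d)*d = 0 := by rw [mul_assoc, htdd]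
  have hsd_sd : (s*d)*(s*d) = 0 := by rw [← mul_assoc, hsd_s, zero_mul]
  have hdt_d : (d*t)*d = 0 := by
    rw [mul_assoc]
    nth_rewrite 1 [hd]
    rw [sub_mul, h2, h4, sub_zero]
  have hsst : s*(s*t) = s*(s*s) := by
    have e2 : s*(s*s) - s*(s*t) = 0 := by rw [← mul_sub, ← mul_sub, ← hd, h1]
    exact (sub_eq_zero.mp e2).symm
  have hstt : s*(t*t) = s*(s*s) := by
    have e1 : s*(t*s) - s*(t*t) = 0 := by rw [← mul_sub, ← mul_sub, ← hd, h2]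
    calc s*(t*t) = s*(t*s) := (sub_eq_zero.mp e1).symm
      _ = s*(s*t) := h9.symm
      _ = s*(s*s) := hsst
  have httt : t*(t*t) = t*(s*s) := by
    have e1 : t*(t*s) - t*(t*t) = 0 := by rw [← mul_sub, ← mul_sub, ← hd, h4]
    have e2 : t*(s*s) - t*(s*t) = 0 := by rw [← mul_sub, ← mul_sub, ← hd, h3]
    calc t*(t*t) = t*(t*s) := (sub_eq_zero.mp e1).symm
      _ = t*(s*t) := h10.symm
      _ = t*(s*s) := (sub_eq_zero.mp e2).symm
  have hdtt : (d*t)*t = d*(s*s) := by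
    rw [mul_assoc, hd, sub_mul, sub_mul, hstt, httt]
  -- facts about powers of (1 - s)
  have Fb : ∀ z : R, s * z = 0 → ∀ k : ℕ, (1 - s)^k * z = z := by
    intro z hz k
    induction k with
    | zero => simp
    | succ k ih => rw [pow_succ', mul_assoc, ih, sub_mul, one_mul, hz, sub_zero]
  have Fc : ∀ z : R, z * s = 0 → ∀ k : ℕ, z * (1 - s)^k = z := by
    intro z hz k
    induction k with
    | zero => simp
    | succ k ih => rw [pow_succ, ← mul_assoc, ih, mul_sub, mul_one, hz, sub_zero]
  have Fa : ∀ k : ℕ, (1 - s)^k * d = d - k • (s*d) := by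
    intro k
    induction k with
    | zero => simp
    | succ k ih =>
        rw [pow_succ', mul_assoc, ih, sub_mul, one_mul, mul_sub, mul_smul_comm, h1,
          smul_zero, sub_zero, succ_nsmul]
        abel
  -- invariants of hseq
  have Hinv : ∀ k : ℕ, (hseq s k) * d = 0 ∧ (hseq s k) * (s*d) = 0 ∧
      (hseq s k) * t = (hseq s k) * s ∧ (hseq s k) * (s*t) = (hseq s k) * (s*s) ∧
      s * (d * hseq s k) = 0 ∧ t * (d * hseq s k) = 0 := by
    intro k
    induction k with
    | zero => simp [hseq]
    | succ k ih =>
      obtain ⟨i1, i2, i3, i4, i5, i6⟩ := ih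
      have hs : hseq s (k+1) = hseq s k - hseq s k * s + (mseq k) • (s*s) := rfl
      set h := hseq s k with hh
      have i5' : ∀ z : R, s*(d*(h*z)) = 0 := fun z => by
        rw [← mul_assoc d h z, ← mul_assoc s (d*h) z, i5, zero_mul]
      have i6' : ∀ z : R, t*(d*(h*z)) = 0 := fun z => by
        rw [← mul_assoc d h z, ← mul_assoc t (d*h) z, i6, zero_mul]
      have h5' : ∀ z : R, s*(d*(s*z)) = 0 := fun z => by
        rw [← mul_assoc d s z, ← mul_assoc s (d*s) z, h5, zero_mul]
      have h7' : ∀ z : R, t*(d*(s*z)) = 0 := fun z => by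
        rw [← mul_assoc d s z, ← mul_assoc t (d*s) z, h7, zero_mul]
      refine ⟨?_, ?_, ?_, ?_, ?_, ?_⟩
      · simp only [hs, add_mul, sub_mul, smul_mul_assoc, mul_assoc, i1, i2, h1,
          mul_zero, smul_zero, sub_zero, add_zero, sub_self, zero_add]
      · simp only [hs, add_mul, sub_mul, smul_mul_assoc, mul_assoc, i2, h1,
          mul_zero, smul_zero, sub_zero, add_zero, sub_self, zero_add]
      · simp only [hs, add_mul, sub_mul, smul_mul_assoc, mul_assoc, i3, i4, hsst]
      · simp only [hs, add_mul, sub_mul, smul_mul_assoc, mul_assoc, i4, hsst]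
      · rw [hs]
        rw [mul_add, mul_sub, mul_smul_comm (mseq k) d (s*s), mul_add, mul_sub,
          mul_smul_comm (mseq k) s (d*(s*s)), i5, i5' s, h5' s, smul_zero]
        abel
      · rw [hs]
        rw [mul_add, mul_sub, mul_smul_comm (mseq k) d (s*s), mul_add, mul_sub,
          mul_smul_comm (mseq k) t (d*(s*s)), i6, i6' s, h7' s, smul_zero]
        abel
  -- the main expansion
  have L1 : ∀ k : ℕ, (1 - t)^k = (1 - s)^k + (k • d - (mseq k) • (s*d + d*t) + d * hseq s k) := by
    intro k
    induction k with
    | zero => simp [hseq, mseq]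
    | succ k ih =>
      obtain ⟨i1, i2, i3, i4, i5, i6⟩ := Hinv k
      have h1t : (1 : R) - t = (1 - s) + d := by rw [hd]; abel
      have hsq : hseq s (k+1) = hseq s k - hseq s k * s + (mseq k) • (s*s) := rfl
      have hmq : mseq (k+1) = mseq k + k := rfl
      set h := hseq s k with hh
      have hΔt : ((k : ℕ) • d - (mseq k) • (s*d + d*t) + d * h) * t
          = (k : ℕ) • (d*t) - (mseq k) • (d*(s*s)) + d * (h * s) := by
        rw [add_mul, sub_mul, smul_mul_assoc, smul_mul_assoc, add_mul, hsd_t, hdtt,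
          zero_add, mul_assoc, i3]
      calc (1 - t)^(k+1) = (1 - t)^k * (1 - t) := pow_succ _ _
        _ = ((1 - s)^k + (k • d - (mseq k) • (s*d + d*t) + d * h)) * (1 - t) := by rw [ih]
        _ = (1 - s)^k * ((1-s) + d)
            + ((k • d - (mseq k) • (s*d + d*t) + d*h)
              - (k • d - (mseq k) • (s*d + d*t) + d*h) * t) := by
            rw [add_mul, mul_one_sub (k • d - (mseq k) • (s*d + d*t) + d*h) t, h1t]
        _ = (1-s)^(k+1) + ((1-s)^k * d)
            + ((k • d - (mseq k) • (s*d + d*t) + d*h)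
              - (k • d - (mseq k) • (s*d + d*t) + d*h) * t) := by
            rw [mul_add, ← pow_succ]
        _ = (1-s)^(k+1) + ((k+1) • d - (mseq (k+1)) • (s*d + d*t) + d * hseq s (k+1)) := by
            rw [Fa k, hΔt, hsq, hmq]
            simp only [mul_add, mul_sub, mul_smul_comm, smul_add, add_nsmul, succ_nsmul]
            abel
  -- zero products needed for b0
  obtain ⟨i1, i2, i3, i4, i5, i6⟩ := Hinv n
  set h := hseq s n with hhn
  set m := mseq n with hmn
  have hddt : d*(d*t) = 0 := by
    rw [← mul_assoc, hdd, sub_mul, mul_assoc, h6, mul_assoc, h8, sub_zero]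
  have hddh : d*(d*h) = 0 := by
    rw [← mul_assoc, hdd, sub_mul, mul_assoc, i5, mul_assoc, i6, sub_zero]
  have hdh_d : (d*h)*d = 0 := by rw [mul_assoc, i1, mul_zero]
  have hdt_dX : ∀ z : R, (d*t)*(d*z) = 0 := fun z => by
    rw [← mul_assoc (d*t) d z, hdt_d, zero_mul]
  have hdh_dX : ∀ z : R, (d*h)*(d*z) = 0 := fun z => by
    rw [← mul_assoc (d*h) d z, hdh_d, zero_mul]
  have hsd_dX : ∀ z : R, (s*d)*(d*z) = 0 := fun z => by
    rw [← mul_assoc (s*d) d z, hsd_d, zero_mul]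
  have htd_dX : ∀ z : R, (t*d)*(d*z) = 0 := fun z => by
    rw [← mul_assoc (t*d) d z, htd_d, zero_mul]
  set b0 : R := n • d - m • (d*t) + d * h with hb0
  have hb0d : b0 * d = (n : ℕ) • (d*d) := by
    rw [hb0, add_mul, sub_mul, smul_mul_assoc, smul_mul_assoc, hdt_d, hdh_d,
      smul_zero, sub_zero, add_zero]
  have hb0dt : b0 * (d*t) = 0 := by
    rw [hb0, add_mul, sub_mul, smul_mul_assoc, smul_mul_assoc, hddt, hdt_dX t, hdh_dX t,
      smul_zero, smul_zero, sub_zero, add_zero]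
  have hb0dh : b0 * (d*h) = 0 := by
    rw [hb0, add_mul, sub_mul, smul_mul_assoc, smul_mul_assoc, hddh, hdt_dX h, hdh_dX h,
      smul_zero, smul_zero, sub_zero, add_zero]
  have hbb : b0 * b0 = ((n*n : ℕ)) • (d*d) := by
    nth_rewrite 2 [hb0]
    rw [mul_add, mul_sub, mul_smul_comm, mul_smul_comm, hb0d, hb0dt, hb0dh,
      smul_zero, sub_zero, add_zero, smul_smul]
  have hddb0 : (d*d) * b0 = 0 := by
    have e1 : (s*d) * b0 = 0 := by
      rw [hb0, mul_add, mul_sub, mul_smul_comm, mul_smul_comm, hsd_d, hsd_dX t, hsd_dX h,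
        smul_zero, smul_zero, sub_zero, add_zero]
    have e2 : (t*d) * b0 = 0 := by
      rw [hb0, mul_add, mul_sub, mul_smul_comm, mul_smul_comm, htd_d, htd_dX t, htd_dX h,
        smul_zero, smul_zero, sub_zero, add_zero]
    rw [hdd, sub_mul, e1, e2, sub_zero]
  have hb3 : (b0 * b0) * b0 = 0 := by rw [hbb, smul_mul_assoc, hddb0, smul_zero]
  set α : ℕ := n*n - m with hα
  set a0 : R := α • (s*d) with ha0
  have ha2 : a0 * a0 = 0 := by rw [ha0, smul_mul_assoc, mul_smul_comm, hsd_sd,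
    smul_zero, smul_zero]
  refine ⟨1 + a0, 1 - a0, 1 + b0, 1 - b0 + b0*b0, ?_, ?_, ?_, ?_, ?_⟩
  · have e : (1 + a0) * (1 - a0) = 1 - a0*a0 := by noncomm_ring
    rw [e, ha2, sub_zero]
  · have e : (1 - a0) * (1 + a0) = 1 - a0*a0 := by noncomm_ring
    rw [e, ha2, sub_zero]
  · have e : (1 + b0) * (1 - b0 + b0*b0) = 1 + (b0*b0)*b0 := by noncomm_ring
    rw [e, hb3, add_zero]
  · have e : (1 - b0 + b0*b0) * (1 + b0) = 1 + (b0*b0)*b0 := by noncomm_ring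
    rw [e, hb3, add_zero]
  · have hV : (1 - s)^n * (1 + b0)
        = (1-s)^n + (n • d - (n*n : ℕ) • (s*d) - m • (d*t) + d*h) := by
      rw [mul_add, mul_one, hb0, mul_add, mul_sub, mul_smul_comm, mul_smul_comm,
        Fa n, Fb (d*t) h6 n, Fb (d*h) i5 n, smul_sub, smul_smul]
    have hsdV : (s*d) * ((1-s)^n * (1 + b0)) = s*d := by
      rw [hV, mul_add, Fc (s*d) hsd_s n, mul_add, mul_sub, mul_sub, mul_smul_comm,
        mul_smul_comm, mul_smul_comm, hsd_d, hsd_sd, hsd_dX t, hsd_dX h,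
        smul_zero, smul_zero, smul_zero, sub_zero, sub_zero, add_zero, add_zero]
    have hαm : α + m = n*n := by
      rw [hα]
      exact Nat.sub_add_cancel (hmn ▸ mseq_le n)
    calc (1 - t)^n = (1-s)^n + (n • d - m • (s*d + d*t) + d*h) := L1 n
      _ = ((1-s)^n + (n • d - (n*n : ℕ) • (s*d) - m • (d*t) + d*h)) + α • (s*d) := by
          rw [smul_add]
          have e : (n*n : ℕ) • (s*d) = α • (s*d) + m • (s*d) := by rw [← add_nsmul, hαm]
          rw [e]; abel
      _ = (1 + a0) * ((1-s)^n * (1 + b0)) := by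
          rw [add_mul, one_mul, ha0, smul_mul_assoc, hsdV, hV]



section Barnes
variable {X Y : Type*} [NormedAddCommGroup X] [NormedSpace ℂ X]
  [NormedAddCommGroup Y] [NormedSpace ℂ Y]

/-- Barnes' trick: if `range (1 - D A)` is closed then so is `range (1 - A D)`. -/
private lemma barnes (A : X →L[ℂ] Y) (D : Y →L[ℂ] X)
    (h : IsClosed ((LinearMap.range ((1 - D ∘L A : X →L[ℂ] X) : X →ₗ[ℂ] X) : Submodule ℂ X) : Set X)) :
    IsClosed ((LinearMap.range ((1 - A ∘L D : Y →L[ℂ] Y) : Y →ₗ[ℂ] Y) : Submodule ℂ Y) : Set Y) := by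
  refine isClosed_of_closure_subset ?_
  intro y hy
  have hDy : D y ∈ closure ((LinearMap.range ((1 - D ∘L A : X →L[ℂ] X) : X →ₗ[ℂ] X) : Submodule ℂ X) : Set X) := by
    refine map_mem_closure D.continuous hy ?_
    rintro w ⟨x, rfl⟩
    refine ⟨D x, ?_⟩
    simp [sub_apply, one_apply, comp_apply, map_sub]
  rw [h.closure_eq] at hDy
  obtain ⟨x, hx⟩ := hDy
  have hx' : x - D (A x) = D y := by
    simpa [sub_apply, one_apply, comp_apply] using hx
  have hAx : A x - A (D (A x)) = A (D y) := by rw [← map_sub, hx']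
  refine ⟨y + A x, ?_⟩
  simp only [SetLike.mem_coe, ContinuousLinearMap.coe_coe, sub_apply, ContinuousLinearMap.one_apply, comp_apply, map_add]
  rw [← hAx]
  abel

private lemma barnes_pow (A : X →L[ℂ] Y) (D : Y →L[ℂ] X) (n : ℕ)
    (h : IsClosed ((LinearMap.range (((1 - D ∘L A) ^ n : X →L[ℂ] X) : X →ₗ[ℂ] X) : Submodule ℂ X) : Set X)) :
    IsClosed ((LinearMap.range (((1 - A ∘L D) ^ n : Y →L[ℂ] Y) : Y →ₗ[ℂ] Y) : Submodule ℂ Y) : Set Y) := by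
  have comm_pow : ∀ (j : ℕ) (x : X), ((1 - A ∘L D)^j) (A x) = A (((1 - D ∘L A)^j) x) := by
    intro j
    induction j with
    | zero => intro x; simp
    | succ k ih =>
        intro x
        rw [pow_succ', pow_succ', ContinuousLinearMap.mul_apply, ContinuousLinearMap.mul_apply]
        have base : ∀ z : X, (1 - A ∘L D) (A z) = A ((1 - D ∘L A) z) := by
          intro z; simp [sub_apply, one_apply, comp_apply, map_sub]
        rw [ih x, base]
  set Q : Y →L[ℂ] Y := ∑ j ∈ Finset.range n, (1 - A ∘L D)^j with hQ
  set Q' : X →L[ℂ] X := ∑ j ∈ Finset.range n, (1 - D ∘L A)^j with hQ'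
  have hQA : ∀ x : X, Q (A x) = A (Q' x) := by
    intro x
    rw [hQ, hQ']
    rw [ContinuousLinearMap.sum_apply, ContinuousLinearMap.sum_apply, map_sum]
    exact Finset.sum_congr rfl fun j _ => comm_pow j x
  have hgeomY : (1 - A ∘L D)^n = 1 - (A ∘L D) * Q := by
    have e := mul_geom_sum (x := (1 - A ∘L D)) n
    have e2 : ((1 - A ∘L D) - 1 : Y →L[ℂ] Y) = -(A ∘L D) := by abel
    rw [e2, neg_mul] at e
    calc (1 - A ∘L D)^n = ((1 - A ∘L D)^n - 1) + 1 := by abel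
      _ = -((A ∘L D) * Q) + 1 := by rw [e]
      _ = 1 - (A ∘L D) * Q := by abel
  have hgeomX : (1 - D ∘L A)^n = 1 - (D ∘L A) * Q' := by
    have e := mul_geom_sum (x := (1 - D ∘L A)) n
    have e2 : ((1 - D ∘L A) - 1 : X →L[ℂ] X) = -(D ∘L A) := by abel
    rw [e2, neg_mul] at e
    calc (1 - D ∘L A)^n = ((1 - D ∘L A)^n - 1) + 1 := by abel
      _ = -((D ∘L A) * Q') + 1 := by rw [e]
      _ = 1 - (D ∘L A) * Q' := by abel
  set D' : Y →L[ℂ] X := D ∘L Q with hD'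
  have e1 : 1 - A ∘L D' = (1 - A ∘L D)^n := by
    rw [hgeomY]
    congr 1
  have e2 : 1 - D' ∘L A = (1 - D ∘L A)^n := by
    rw [hgeomX]
    congr 1
    ext x
    simp [hD', comp_apply, ContinuousLinearMap.mul_apply, hQA x]
  have h' : IsClosed ((LinearMap.range ((1 - D' ∘L A : X →L[ℂ] X) : X →ₗ[ℂ] X) : Submodule ℂ X) : Set X) := by
    rw [e2]; exact h
  have := barnes A D' h'
  rwa [e1] at this

private lemma range_neg_clm {E : Type*} [NormedAddCommGroup E] [NormedSpace ℂ E]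
    (g : E →L[ℂ] E) : LinearMap.range ((-g : E →L[ℂ] E) : E →ₗ[ℂ] E) = LinearMap.range (g : E →ₗ[ℂ] E) := by
  ext y
  simp only [LinearMap.mem_range, ContinuousLinearMap.coe_coe, ContinuousLinearMap.neg_apply]
  constructor
  · rintro ⟨x, hx⟩; exact ⟨-x, (map_neg g x).trans hx⟩
  · rintro ⟨x, hx⟩; exact ⟨-x, by rw [map_neg, neg_neg, hx]⟩

private lemma range_sub_one_pow {E : Type*} [NormedAddCommGroup E] [NormedSpace ℂ E]
    (f : E →L[ℂ] E) (n : ℕ) :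
    LinearMap.range (((f - 1) ^ n : E →L[ℂ] E) : E →ₗ[ℂ] E) = LinearMap.range (((1 - f) ^ n : E →L[ℂ] E) : E →ₗ[ℂ] E) := by
  have hneg : (1 : E →L[ℂ] E) - f = -(f - 1) := (neg_sub _ _).symm
  rcases Nat.even_or_odd n with he | ho
  · rw [hneg, he.neg_pow]
  · rw [hneg, ho.neg_pow, range_neg_clm]

private lemma conj_closed {E : Type*} [NormedAddCommGroup E] [NormedSpace ℂ E]
    {f u u' v v' : E →L[ℂ] E} (huu' : u * u' = 1) (hu'u : u' * u = 1)
    (hvv' : v * v' = 1) (hv'v : v' * v = 1) :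
    IsClosed ((LinearMap.range ((u * (f * v) : E →L[ℂ] E) : E →ₗ[ℂ] E) : Submodule ℂ E) : Set E) ↔
      IsClosed ((LinearMap.range (f : E →ₗ[ℂ] E) : Submodule ℂ E) : Set E) := by
  have hfv : LinearMap.range ((f * v : E →L[ℂ] E) : E →ₗ[ℂ] E) = LinearMap.range (f : E →ₗ[ℂ] E) := by
    ext y
    simp only [LinearMap.mem_range, ContinuousLinearMap.coe_coe, ContinuousLinearMap.mul_apply]
    constructor
    · rintro ⟨x, rfl⟩; exact ⟨v x, rfl⟩
    · rintro ⟨x, rfl⟩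
      refine ⟨v' x, ?_⟩
      rw [← ContinuousLinearMap.mul_apply v v' x, hvv', ContinuousLinearMap.one_apply]
  set e : E ≃L[ℂ] E := ContinuousLinearEquiv.equivOfInverse u u'
    (fun x => by rw [← ContinuousLinearMap.mul_apply, hu'u, ContinuousLinearMap.one_apply])
    (fun x => by rw [← ContinuousLinearMap.mul_apply, huu', ContinuousLinearMap.one_apply])
    with he
  have himg : ((LinearMap.range ((u * (f * v) : E →L[ℂ] E) : E →ₗ[ℂ] E) : Submodule ℂ E) : Set E)
      = e '' ((LinearMap.range (f : E →ₗ[ℂ] E) : Submodule ℂ E) : Set E) := by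
    ext y
    simp only [SetLike.mem_coe, LinearMap.mem_range, Set.mem_image, ContinuousLinearMap.coe_coe,
      ContinuousLinearMap.mul_apply]
    constructor
    · rintro ⟨x, rfl⟩
      exact ⟨f (v x), ⟨v x, rfl⟩, rfl⟩
    · rintro ⟨z, ⟨x, rfl⟩, rfl⟩
      refine ⟨v' x, ?_⟩
      have : v (v' x) = x := by
        rw [← ContinuousLinearMap.mul_apply, hvv', ContinuousLinearMap.one_apply]
      rw [this]
      rfl
  rw [himg]
  exact e.toHomeomorph.isClosed_image

end Barnes

variable {X Y : Type*} [NormedAddCommGroup X] [NormedSpace ℂ X] [CompleteSpace X]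
  [NormedAddCommGroup Y] [NormedSpace ℂ Y] [CompleteSpace Y]
theorem stmt14 (A : X →L[ℂ] Y) (B C : Y →L[ℂ] X)
    (h1 : A ∘L B ∘L A ∘L B ∘L A = A ∘L B ∘L A ∘L C ∘L A)
    (h2 : A ∘L B ∘L A ∘L C ∘L A = A ∘L C ∘L A ∘L B ∘L A)
    (h3 : A ∘L C ∘L A ∘L B ∘L A = A ∘L C ∘L A ∘L C ∘L A) (n : ℕ) (hn : 1 ≤ n) :
    IsClosed ((LinearMap.range (((A ∘L C - 1) ^ n : Y →L[ℂ] Y) : Y →ₗ[ℂ] Y) : Submodule ℂ Y) : Set Y) ↔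
      IsClosed ((LinearMap.range (((B ∘L A - 1) ^ n : X →L[ℂ] X) : X →ₗ[ℂ] X) : Submodule ℂ X) : Set X) := by
  have e1 : ∀ x : X, A (B (A (B (A x)))) = A (B (A (C (A x)))) := fun x => by
    simpa [comp_apply] using ContinuousLinearMap.ext_iff.mp h1 x
  have e2 : ∀ x : X, A (B (A (C (A x)))) = A (C (A (B (A x)))) := fun x => by
    simpa [comp_apply] using ContinuousLinearMap.ext_iff.mp h2 x
  have e3 : ∀ x : X, A (C (A (B (A x)))) = A (C (A (C (A x)))) := fun x => by
    simpa [comp_apply] using ContinuousLinearMap.ext_iff.mp h3 x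
  have R1 : (B ∘L A) * ((B ∘L A) * ((B ∘L A) - (C ∘L A))) = 0 := by
    ext x
    simp only [ContinuousLinearMap.mul_apply, sub_apply, comp_apply, map_sub, zero_apply]
    rw [e1 x, sub_self]
  have R2 : (B ∘L A) * ((C ∘L A) * ((B ∘L A) - (C ∘L A))) = 0 := by
    ext x
    simp only [ContinuousLinearMap.mul_apply, sub_apply, comp_apply, map_sub, zero_apply]
    rw [e3 x, sub_self]
  have R3 : (C ∘L A) * ((B ∘L A) * ((B ∘L A) - (C ∘L A))) = 0 := by
    ext x
    simp only [ContinuousLinearMap.mul_apply, sub_apply, comp_apply, map_sub, zero_apply]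
    rw [e1 x, sub_self]
  have R4 : (C ∘L A) * ((C ∘L A) * ((B ∘L A) - (C ∘L A))) = 0 := by
    ext x
    simp only [ContinuousLinearMap.mul_apply, sub_apply, comp_apply, map_sub, zero_apply]
    rw [e3 x, sub_self]
  have R5 : (B ∘L A) * (((B ∘L A) - (C ∘L A)) * (B ∘L A)) = 0 := by
    ext x
    simp only [ContinuousLinearMap.mul_apply, sub_apply, comp_apply, map_sub, zero_apply]
    rw [e1 x, e2 x, sub_self]
  have R6 : (B ∘L A) * (((B ∘L A) - (C ∘L A)) * (C ∘L A)) = 0 := by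
    ext x
    simp only [ContinuousLinearMap.mul_apply, sub_apply, comp_apply, map_sub, zero_apply]
    rw [e2 x, e3 x, sub_self]
  have R7 : (C ∘L A) * (((B ∘L A) - (C ∘L A)) * (B ∘L A)) = 0 := by
    ext x
    simp only [ContinuousLinearMap.mul_apply, sub_apply, comp_apply, map_sub, zero_apply]
    rw [e1 x, e2 x, sub_self]
  have R8 : (C ∘L A) * (((B ∘L A) - (C ∘L A)) * (C ∘L A)) = 0 := by
    ext x
    simp only [ContinuousLinearMap.mul_apply, sub_apply, comp_apply, map_sub, zero_apply]
    rw [e2 x, e3 x, sub_self]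
  have R9 : (B ∘L A) * ((B ∘L A) * (C ∘L A)) = (B ∘L A) * ((C ∘L A) * (B ∘L A)) := by
    ext x
    simp only [ContinuousLinearMap.mul_apply, comp_apply]
    rw [e2 x]
  have R10 : (C ∘L A) * ((B ∘L A) * (C ∘L A)) = (C ∘L A) * ((C ∘L A) * (B ∘L A)) := by
    ext x
    simp only [ContinuousLinearMap.mul_apply, comp_apply]
    rw [e2 x]
  obtain ⟨a, a', b, b', haa', ha'a, hbb', hb'b, hkey⟩ :=
    ring_key (B ∘L A) (C ∘L A) ((B ∘L A) - (C ∘L A)) rfl R1 R2 R3 R4 R5 R6 R7 R8 R9 R10 n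
  rw [range_sub_one_pow (A ∘L C) n, range_sub_one_pow (B ∘L A) n]
  constructor
  · intro hcl
    have hX : IsClosed ((LinearMap.range (((1 - C ∘L A) ^ n : X →L[ℂ] X) : X →ₗ[ℂ] X) : Submodule ℂ X) : Set X) :=
      barnes_pow C A n hcl
    rw [hkey] at hX
    exact (conj_closed haa' ha'a hbb' hb'b).mp hX
  · intro hcl
    have hX : IsClosed ((LinearMap.range (((1 - C ∘L A) ^ n : X →L[ℂ] X) : X →ₗ[ℂ] X) : Submodule ℂ X) : Set X) := by
      rw [hkey]
      exact (conj_closed haa' ha'a hbb' hb'b).mpr hcl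
    exact barnes_pow A C n hX
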